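/- arXiv:2007.00568 — 4 statements merged into one kernel-verified Lean document; each statement's English description precedes it below -/
import Mathlib

section
/- Let P be a Borel probability measure on Euclidean space ℝ^k, let K > 0 and 0 < ε < 1/4, and suppose P({y : ‖y‖₂ ≤ K}) ≥ 1 − ε. Then every spatial median θ⋆ of P (i.e., every global minimizer of f_P) satisfies ‖θ⋆‖₂ ≤ 3K. -/
open MeasureTheory

theorem spatial_median_localization
    (k : ℕ) (P : Measure (EuclideanSpace ℝ (Fin k))) [IsProbabilityMeasure P]
    (K ε : ℝ) (hK : 0 < K) (hε0 : 0 < ε) (hε : ε < 1/4)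
    (hmass : ENNReal.ofReal (1 - ε) ≤ P {y | ‖y‖ ≤ K})
    (θstar : EuclideanSpace ℝ (Fin k))
    (hmin : ∀ θ : EuclideanSpace ℝ (Fin k),
      (∫ y, (‖y - θstar‖ - ‖y‖) ∂P) ≤ ∫ y, (‖y - θ‖ - ‖y‖) ∂P) :
    ‖θstar‖ ≤ 3 * K := by
  by_contra hcon
  push_neg at hcon
  set M := ‖θstar‖ with hM
  set A : Set (EuclideanSpace ℝ (Fin k)) := {y | ‖y‖ ≤ K} with hA
  have hAmeas : MeasurableSet A :=
    (isClosed_le continuous_norm continuous_const).measurableSet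
  -- integral at θ = 0 is 0
  have h0 : (∫ y, (‖y - θstar‖ - ‖y‖) ∂P) ≤ 0 := by
    have := hmin 0
    simpa using this
  -- integrability
  have hcont : Continuous fun y : EuclideanSpace ℝ (Fin k) => ‖y - θstar‖ - ‖y‖ :=
    ((continuous_id.sub continuous_const).norm).sub continuous_norm
  have hbound : ∀ y : EuclideanSpace ℝ (Fin k), |‖y - θstar‖ - ‖y‖| ≤ M := by
    intro y
    have := abs_norm_sub_norm_le (y - θstar) y
    simpa [hM, norm_sub_rev] using this
  have hint : Integrable (fun y => ‖y - θstar‖ - ‖y‖) P := by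
    refine Integrable.mono' (integrable_const M) hcont.aestronglyMeasurable ?_
    filter_upwards with y
    simpa [Real.norm_eq_abs] using hbound y
  -- measures
  have hPA : P A ≠ ⊤ := measure_ne_top _ _
  set a : ℝ := (P A).toReal with ha
  have ha1 : 1 - ε ≤ a := by
    have := (ENNReal.ofReal_le_iff_le_toReal hPA).mp hmass
    simpa [ha] using this
  have ha2 : a ≤ 1 := by
    have := prob_le_one (μ := P) (s := A)
    have := ENNReal.toReal_mono (by simp) this
    simpa [ha] using this
  have hcompl : (P Aᶜ).toReal = 1 - a := by
    have h := measure_compl hAmeas hPA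
    rw [h, measure_univ]
    rw [ENNReal.toReal_sub_of_le (prob_le_one) (by simp)]
    simp [ha]
  -- lower bounds on the pieces
  have hintA : IntegrableOn (fun y => ‖y - θstar‖ - ‖y‖) A P := hint.integrableOn
  have hintAc : IntegrableOn (fun y => ‖y - θstar‖ - ‖y‖) Aᶜ P := hint.integrableOn
  have hlow1 : (M - 2 * K) * a ≤ ∫ y in A, (‖y - θstar‖ - ‖y‖) ∂P := by
    have : ∫ y in A, (M - 2 * K) ∂P ≤ ∫ y in A, (‖y - θstar‖ - ‖y‖) ∂P := by
      refine setIntegral_mono_on (integrable_const _).integrableOn hintA hAmeas ?_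
      intro y hy
      have h1 : M - ‖y‖ ≤ ‖y - θstar‖ := by
        have := norm_sub_norm_le θstar y
        have h2 : ‖θstar - y‖ = ‖y - θstar‖ := norm_sub_rev _ _
        linarith [this, h2.le, h2.ge]
      have h2 : ‖y‖ ≤ K := hy
      linarith
    simpa [ha, measureReal_def, smul_eq_mul, mul_comm] using this
  have hlow2 : (-M) * (1 - a) ≤ ∫ y in Aᶜ, (‖y - θstar‖ - ‖y‖) ∂P := by
    have : ∫ y in Aᶜ, (-M) ∂P ≤ ∫ y in Aᶜ, (‖y - θstar‖ - ‖y‖) ∂P := by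
      refine setIntegral_mono_on (integrable_const _).integrableOn hintAc
        hAmeas.compl ?_
      intro y _
      have := hbound y
      have := abs_le.mp this
      linarith [this.1]
    simpa [measureReal_def, hcompl, smul_eq_mul, mul_comm] using this
  have hsplit : (∫ y in A, (‖y - θstar‖ - ‖y‖) ∂P) + (∫ y in Aᶜ, (‖y - θstar‖ - ‖y‖) ∂P)
      = ∫ y, (‖y - θstar‖ - ‖y‖) ∂P := integral_add_compl hAmeas hint
  have hfinal : (M - 2 * K) * a + (-M) * (1 - a) ≤ 0 := by
    calc (M - 2 * K) * a + (-M) * (1 - a)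
        ≤ (∫ y in A, (‖y - θstar‖ - ‖y‖) ∂P) + (∫ y in Aᶜ, (‖y - θstar‖ - ‖y‖) ∂P) :=
          add_le_add hlow1 hlow2
      _ = ∫ y, (‖y - θstar‖ - ‖y‖) ∂P := hsplit
      _ ≤ 0 := h0
  nlinarith [mul_pos hK (show (0:ℝ) < 1 - 4 * ε by linarith),
    mul_le_mul_of_nonneg_left ha1 (show (0:ℝ) ≤ M - 2 * K by nlinarith),
    mul_le_mul_of_nonneg_left ha2 (show (0:ℝ) ≤ M by nlinarith)]
end

section
/- Let P be a Borel probability measure on Euclidean space ℝ^k and let θ₀ ∈ ℝ^k satisfy P({θ₀}) = 0. Then the spatial median objective f_P(θ) = ∫ (‖y − θ‖₂ − ‖y‖₂) dP(y) is differentiable at θ₀, with gradient −∫ U(y − θ₀) dP(y), where U is the spatial sign function defined by U(z) = z/‖z‖₂ for z ≠ 0 and U(0) = 0. -/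
open MeasureTheory InnerProductSpace Metric

/-- The spatial sign function: `U z = z / ‖z‖` for `z ≠ 0`, and `U 0 = 0`
(note `‖0‖⁻¹ • 0 = 0`). -/
noncomputable def spatialSign {k : ℕ} (z : EuclideanSpace ℝ (Fin k)) :
    EuclideanSpace ℝ (Fin k) := ‖z‖⁻¹ • z

lemma hasFDerivAt_norm' {E : Type*} [NormedAddCommGroup E] [InnerProductSpace ℝ E]
    {x : E} (hx : x ≠ 0) :
    HasFDerivAt (fun y : E => ‖y‖) (innerSL ℝ (‖x‖⁻¹ • x)) x := by
  have h1 : HasFDerivAt (fun y : E => ‖y‖ ^ 2) (2 • (innerSL ℝ x)) x := by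
    simpa using (hasFDerivAt_id x).norm_sq
  have h2 : HasDerivAt Real.sqrt (1 / (2 * Real.sqrt (‖x‖ ^ 2))) (‖x‖ ^ 2) := by
    apply Real.hasDerivAt_sqrt
    exact pow_ne_zero 2 (norm_ne_zero_iff.mpr hx)
  have h3 := h2.comp_hasFDerivAt x h1
  have hn : ‖x‖ ≠ 0 := norm_ne_zero_iff.mpr hx
  have heq : (fun y : E => Real.sqrt (‖y‖ ^ 2)) = fun y : E => ‖y‖ := by
    funext y; rw [Real.sqrt_sq (norm_nonneg y)]
  rw [show Real.sqrt ∘ (fun y : E => ‖y‖ ^ 2) = fun y : E => ‖y‖ from heq] at h3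
  convert h3 using 1
  · rfl
  · rfl
  rw [Real.sqrt_sq (norm_nonneg x)]
  ext y
  simp [real_inner_smul_left]
  ring

theorem spatial_median_objective_hasGradientAt
    (k : ℕ) (P : Measure (EuclideanSpace ℝ (Fin k))) [IsProbabilityMeasure P]
    (θ₀ : EuclideanSpace ℝ (Fin k)) (hθ₀ : P {θ₀} = 0) :
    HasGradientAt (fun θ : EuclideanSpace ℝ (Fin k) => ∫ y, (‖y - θ‖ - ‖y‖) ∂P)
      (-∫ y, spatialSign (y - θ₀) ∂P) θ₀ := by
  have hsm : AEStronglyMeasurable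
      (fun y : EuclideanSpace ℝ (Fin k) => spatialSign (y - θ₀)) P := by
    apply Measurable.aestronglyMeasurable
    exact ((measurable_norm.comp (measurable_id.sub measurable_const)).inv).smul
      (measurable_id.sub measurable_const)
  have hsint : Integrable
      (fun y : EuclideanSpace ℝ (Fin k) => spatialSign (y - θ₀)) P := by
    refine ⟨hsm, ?_⟩
    apply HasFiniteIntegral.of_bounded (C := 1)
    filter_upwards with y
    rw [spatialSign, norm_smul, norm_inv, norm_norm]
    rcases eq_or_ne (y - θ₀) 0 with h | h
    · simp [h]
    · rw [inv_mul_cancel₀ (norm_ne_zero_iff.mpr h)]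
  set F' : EuclideanSpace ℝ (Fin k) → EuclideanSpace ℝ (Fin k) →L[ℝ] ℝ :=
    fun y => (toDual ℝ _) (-(spatialSign (y - θ₀))) with hF'
  have key := hasFDerivAt_integral_of_dominated_loc_of_lip (μ := P)
    (F := fun θ y => ‖y - θ‖ - ‖y‖) (F' := F') (x₀ := θ₀) (bound := fun _ => 1)
    (s := ball θ₀ 1) (ball_mem_nhds θ₀ one_pos) ?_ ?_ ?_ ?_ ?_ ?_
  · rw [hasGradientAt_iff_hasFDerivAt]
    convert key.2 using 1
    · rfl
    · rfl
    apply ContinuousLinearMap.ext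
    intro v
    rw [ContinuousLinearMap.integral_apply key.1]
    simp only [hF', toDual_apply_apply]
    simp_rw [real_inner_comm]
    have h := integral_inner (𝕜 := ℝ) hsint.neg v
    simp only [Pi.neg_apply] at h
    rw [integral_neg] at h
    exact h.symm
  · filter_upwards with θ
    exact (Continuous.sub (continuous_id.sub continuous_const).norm
      continuous_norm).aestronglyMeasurable
  · refine ⟨(Continuous.sub (continuous_id.sub continuous_const).norm
      continuous_norm).aestronglyMeasurable, ?_⟩
    apply HasFiniteIntegral.of_bounded (C := ‖θ₀‖)
    filter_upwards with y
    calc ‖‖y - θ₀‖ - ‖y‖‖ ≤ ‖(y - θ₀) - y‖ := abs_norm_sub_norm_le _ _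
    _ = ‖θ₀‖ := by rw [sub_sub_cancel_left, norm_neg]
  · exact ((toDual ℝ _).continuous.comp_aestronglyMeasurable hsm.neg)
  · filter_upwards with y
    have hl : LipschitzWith 1 (fun θ : EuclideanSpace ℝ (Fin k) => ‖y - θ‖ - ‖y‖) := by
      apply LipschitzWith.of_dist_le_mul
      intro a b
      rw [NNReal.coe_one, one_mul, dist_sub_right, Real.dist_eq]
      calc |‖y - a‖ - ‖y - b‖| ≤ ‖(y - a) - (y - b)‖ := abs_norm_sub_norm_le _ _
      _ = dist a b := by rw [sub_sub_sub_cancel_left, ← dist_eq_norm, dist_comm]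
    have hone : Real.nnabs (1 : ℝ) = 1 := by simp
    rw [hone]
    exact hl.lipschitzOnWith
  · exact integrable_const 1
  · have hne : ∀ᵐ y ∂P, y ≠ θ₀ := by
      rw [ae_iff]
      have : {y : EuclideanSpace ℝ (Fin k) | ¬ y ≠ θ₀} = {θ₀} := by ext y; simp
      rw [this]; exact hθ₀
    filter_upwards [hne] with y hy
    have hyz : y - θ₀ ≠ 0 := sub_ne_zero.mpr hy
    have h1 : HasFDerivAt (fun θ : EuclideanSpace ℝ (Fin k) => y - θ)
        (-(ContinuousLinearMap.id ℝ _)) θ₀ := by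
      simpa using (hasFDerivAt_id θ₀).const_sub y
    have h2 := (hasFDerivAt_norm' hyz).comp θ₀ h1
    have h3 := h2.sub_const ‖y‖
    convert h3 using 1
    · rfl
    ext v
    simp [hF', spatialSign, toDual_apply_apply, real_inner_smul_left, inner_neg_left]
end

section
/- Let P be a Borel probability measure on Euclidean space ℝ^k, and let θ⋆ be a spatial median of P (a global minimizer of f_P) with P({θ⋆}) = 0. Then the expected spatial sign vanishes at θ⋆: ∫ U(y − θ⋆) dP(y) = 0, where U(z) = z/‖z‖₂ for z ≠ 0 and U(0) = 0. -/
open MeasureTheory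

section Aux
set_option maxHeartbeats 1000000
open Filter Topology RealInnerProductSpace

private lemma norm_diff_quot_tendsto {E : Type*} [NormedAddCommGroup E] [InnerProductSpace ℝ E]
    (z v : E) (hz : z ≠ 0) :
    Tendsto (fun t : ℝ => (‖z - t • v‖ - ‖z‖) / t) (𝓝[≠] (0:ℝ))
      (𝓝 (-(⟪z, v⟫ / ‖z‖))) := by
  have hzpos : (0:ℝ) < ‖z‖ := norm_pos_iff.mpr hz
  have key : ∀ t : ℝ, t ≠ 0 →
      (‖z - t • v‖ - ‖z‖) / t = (-(2 * ⟪z, v⟫) + t * ‖v‖^2) / (‖z - t • v‖ + ‖z‖) := by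
    intro t ht
    have hden : (0:ℝ) < ‖z - t • v‖ + ‖z‖ := by positivity
    have hsq : ‖z - t • v‖^2 = ‖z‖^2 - 2 * (t * ⟪z, v⟫) + t^2 * ‖v‖^2 := by
      rw [norm_sub_sq_real, real_inner_smul_right, norm_smul, Real.norm_eq_abs, mul_pow, sq_abs]
    have : (‖z - t • v‖ - ‖z‖) * (‖z - t • v‖ + ‖z‖) = t * (-(2 * ⟪z, v⟫) + t * ‖v‖^2) := by
      ring_nf
      nlinarith [hsq]
    field_simp
    nlinarith [this]
  have hcont : Tendsto (fun t : ℝ => (-(2 * ⟪z, v⟫) + t * ‖v‖^2) / (‖z - t • v‖ + ‖z‖))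
      (𝓝 (0:ℝ)) (𝓝 (-(⟪z, v⟫ / ‖z‖))) := by
    have h1 : Tendsto (fun t : ℝ => (-(2 * ⟪z, v⟫) + t * ‖v‖^2)) (𝓝 (0:ℝ))
        (𝓝 (-(2 * ⟪z, v⟫))) := by
      have hc : Continuous fun t : ℝ => (-(2 * ⟪z, v⟫) + t * ‖v‖^2) := by continuity
      simpa using hc.tendsto 0
    have h2 : Tendsto (fun t : ℝ => ‖z - t • v‖ + ‖z‖) (𝓝 (0:ℝ)) (𝓝 (2 * ‖z‖)) := by
      have : Continuous fun t : ℝ => ‖z - t • v‖ + ‖z‖ := by continuity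
      have := this.tendsto (0:ℝ)
      simpa [two_mul] using this
    have := h1.div h2 (by positivity)
    have heq : -(⟪z, v⟫ / ‖z‖) = -(2 * ⟪z, v⟫) / (2 * ‖z‖) := by
      rw [neg_div, mul_div_mul_left _ _ (two_ne_zero' ℝ)]
    rw [heq]
    exact this
  refine Tendsto.congr' ?_ (hcont.mono_left nhdsWithin_le_nhds)
  filter_upwards [self_mem_nhdsWithin] with t ht
  exact (key t ht).symm

theorem expected_spatial_sign_vanishes_at_median
    (k : ℕ) (P : Measure (EuclideanSpace ℝ (Fin k))) [IsProbabilityMeasure P]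
    (θstar : EuclideanSpace ℝ (Fin k)) (hθstar : P {θstar} = 0)
    (hmin : ∀ θ : EuclideanSpace ℝ (Fin k),
      (∫ y, (‖y - θstar‖ - ‖y‖) ∂P) ≤ ∫ y, (‖y - θ‖ - ‖y‖) ∂P) :
    ∫ y, spatialSign (y - θstar) ∂P = 0 := by
  simp only [spatialSign]
  set U : EuclideanSpace ℝ (Fin k) → EuclideanSpace ℝ (Fin k) := fun y => ‖y - θstar‖⁻¹ • (y - θstar) with hU
  -- measurability & integrability of U
  have hmsub : Measurable fun y : EuclideanSpace ℝ (Fin k) => y - θstar := measurable_id.sub measurable_const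
  have hUmeas : AEStronglyMeasurable U P :=
    ((hmsub.norm.inv).smul hmsub).aestronglyMeasurable
  have hUbd : ∀ y, ‖U y‖ ≤ 1 := by
    intro y
    by_cases h : y - θstar = 0
    · simp [hU, h]
    · have : ‖U y‖ = ‖y - θstar‖⁻¹ * ‖y - θstar‖ := by
        simp [hU, norm_smul, abs_of_nonneg (inv_nonneg.mpr (norm_nonneg _))]
      rw [this, inv_mul_cancel₀ (norm_ne_zero_iff.mpr h)]
  have hUint : Integrable U P := by
    refine (integrable_const (1:ℝ)).mono' hUmeas ?_
    filter_upwards with y using hUbd y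
  -- integrability of the objective integrand for any θ
  have hobj : ∀ θ : EuclideanSpace ℝ (Fin k), Integrable (fun y => ‖y - θ‖ - ‖y‖) P := by
    intro θ
    refine (integrable_const (‖θ‖ : ℝ)).mono'
      ((((measurable_id.sub measurable_const : Measurable fun y : EuclideanSpace ℝ (Fin k) => y - θ)).norm.sub measurable_norm).aestronglyMeasurable) ?_
    filter_upwards with y
    have := abs_norm_sub_norm_le (y - θ) y
    simp only [sub_sub_cancel_left, norm_neg] at this
    simpa [Real.norm_eq_abs] using this
  -- key directional inequality
  have key : ∀ v : EuclideanSpace ℝ (Fin k), (∫ y, ⟪U y, v⟫ ∂P) ≤ 0 := by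
    intro v
    set t : ℕ → ℝ := fun n => ((n : ℝ) + 1)⁻¹ with ht
    have htpos : ∀ n, 0 < t n := fun n => by positivity
    have ht0 : Tendsto t atTop (𝓝[≠] (0:ℝ)) := by
      refine tendsto_nhdsWithin_of_tendsto_nhds_of_eventually_within _ ?_ ?_
      · simpa [ht] using tendsto_one_div_add_atTop_nhds_zero_nat (𝕜 := ℝ)
      · filter_upwards with n using (htpos n).ne'
    set F : ℕ → EuclideanSpace ℝ (Fin k) → ℝ := fun n y => (‖y - θstar - t n • v‖ - ‖y - θstar‖) / t n with hF
    have hFmeas : ∀ n, AEStronglyMeasurable (F n) P := by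
      intro n
      exact (((hmsub.sub measurable_const).norm.sub hmsub.norm).div_const _).aestronglyMeasurable
    have hFbd : ∀ n, ∀ᵐ y ∂P, ‖F n y‖ ≤ ‖v‖ := by
      intro n
      filter_upwards with y
      have h1 : |‖y - θstar - t n • v‖ - ‖y - θstar‖| ≤ ‖t n • v‖ := by
        have := abs_norm_sub_norm_le (y - θstar - t n • v) (y - θstar)
        simpa [sub_sub_cancel_left] using this
      rw [norm_smul, Real.norm_eq_abs, abs_of_pos (htpos n)] at h1
      have : ‖F n y‖ = |‖y - θstar - t n • v‖ - ‖y - θstar‖| / t n := by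
        rw [hF]; rw [Real.norm_eq_abs, abs_div, abs_of_pos (htpos n)]
      rw [this, div_le_iff₀ (htpos n)]
      linarith [h1]
    have hlim : ∀ᵐ y ∂P, Tendsto (fun n => F n y) atTop (𝓝 (-(⟪U y, v⟫))) := by
      have hne : ∀ᵐ y ∂P, y ≠ θstar := by
        rw [ae_iff]
        simpa using hθstar
      filter_upwards [hne] with y hy
      have hz : y - θstar ≠ 0 := sub_ne_zero.mpr hy
      have := (norm_diff_quot_tendsto (y - θstar) v hz).comp ht0
      have heq : -(⟪(y - θstar : EuclideanSpace ℝ (Fin k)), v⟫ / ‖y - θstar‖) = -(⟪U y, v⟫) := by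
        rw [hU]
        rw [real_inner_smul_left]
        field_simp
      rw [heq] at this
      exact this
    have hDCT := tendsto_integral_of_dominated_convergence (fun _ => ‖v‖) hFmeas
      (integrable_const _) hFbd hlim
    -- each ∫ F n ≥ 0
    have hnn : ∀ n, 0 ≤ ∫ y, F n y ∂P := by
      intro n
      have h1 : ∫ y, F n y ∂P
          = ((∫ y, (‖y - (θstar + t n • v)‖ - ‖y‖) ∂P) - ∫ y, (‖y - θstar‖ - ‖y‖) ∂P) / t n := by
        rw [← integral_sub (hobj _) (hobj _), ← integral_div]
        congr 1
        funext y
        show (‖y - θstar - t n • v‖ - ‖y - θstar‖) / t n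
          = (‖y - (θstar + t n • v)‖ - ‖y‖ - (‖y - θstar‖ - ‖y‖)) / t n
        rw [sub_sub]
        ring
      rw [h1]
      have := hmin (θstar + t n • v)
      exact div_nonneg (by linarith) (htpos n).le
    have hge : 0 ≤ ∫ y, -(⟪U y, v⟫) ∂P := ge_of_tendsto' hDCT hnn |>.trans_eq rfl
    rw [integral_neg] at hge
    linarith
  -- conclude: all directional integrals vanish
  have hall : ∀ v : EuclideanSpace ℝ (Fin k), ∫ y, ⟪U y, v⟫ ∂P = 0 := by
    intro v
    have h1 := key v
    have h2 := key (-v)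
    have h2' : -∫ y, ⟪U y, v⟫ ∂P ≤ 0 := by
      rw [← integral_neg]
      simpa [inner_neg_right] using h2
    linarith
  refine integral_eq_zero_of_forall_integral_inner_eq_zero (𝕜 := ℝ) _ hUint ?_
  intro c
  have : (∫ y, ⟪c, U y⟫ ∂P) = ∫ y, ⟪U y, c⟫ ∂P := by
    congr 1
    funext y
    exact real_inner_comm _ _
  rw [this]
  exact hall c

end Aux
end

section
/- Let P be a Borel probability measure on Euclidean space ℝ^k and θ ∈ ℝ^k, and suppose that P({θ}) = 0, that ∫ ‖y − θ‖₂⁻¹ dP(y) < ∞, and that no line through θ carries full P-mass, i.e., for every unit vector v ∈ ℝ^k one has P({θ + t·v : t ∈ ℝ}) < 1. Then the matrix V_{θ,P} = ∫ ‖y − θ‖₂⁻¹ (I_k − U(y − θ) U(y − θ)ᵀ) dP(y) is positive definite: for every nonzero h ∈ ℝ^k, ∫ (‖h‖₂² − ⟨U(y − θ), h⟩²)/‖y − θ‖₂ dP(y) > 0. -/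
open MeasureTheory RealInnerProductSpace

lemma spatialSign_norm_le {k : ℕ} (z : EuclideanSpace ℝ (Fin k)) :
    ‖spatialSign z‖ ≤ 1 := by
  rcases eq_or_ne z 0 with rfl | hz
  · simp [spatialSign]
  · have : ‖z‖ ≠ 0 := norm_ne_zero_iff.mpr hz
    simp [spatialSign, norm_smul, abs_of_nonneg (inv_nonneg.mpr (norm_nonneg z)),
      inv_mul_cancel₀ this]

lemma spatialSign_norm_one {k : ℕ} {z : EuclideanSpace ℝ (Fin k)} (hz : z ≠ 0) :
    ‖spatialSign z‖ = 1 := by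
  have : ‖z‖ ≠ 0 := norm_ne_zero_iff.mpr hz
  simp [spatialSign, norm_smul, abs_of_nonneg (inv_nonneg.mpr (norm_nonneg z)),
    inv_mul_cancel₀ this]

theorem V_matrix_positive_definite
    (k : ℕ) (P : Measure (EuclideanSpace ℝ (Fin k))) [IsProbabilityMeasure P]
    (θ : EuclideanSpace ℝ (Fin k))
    (hatom : P {θ} = 0)
    (hint : Integrable (fun y => ‖y - θ‖⁻¹) P)
    (hline : ∀ v : EuclideanSpace ℝ (Fin k), ‖v‖ = 1 →
      P {x | ∃ t : ℝ, x = θ + t • v} < 1) :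
    ∀ h : EuclideanSpace ℝ (Fin k), h ≠ 0 →
      0 < ∫ y, (‖h‖^2 - ⟪spatialSign (y - θ), h⟫^2) / ‖y - θ‖ ∂P := by
  intro h hh
  set f : EuclideanSpace ℝ (Fin k) → ℝ :=
    fun y => (‖h‖^2 - ⟪spatialSign (y - θ), h⟫^2) / ‖y - θ‖ with hf
  have hh' : ‖h‖ ≠ 0 := norm_ne_zero_iff.mpr hh
  -- numerator nonneg
  have hnum : ∀ y : EuclideanSpace ℝ (Fin k),
      0 ≤ ‖h‖^2 - ⟪spatialSign (y - θ), h⟫^2 := by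
    intro y
    have h1 : |⟪spatialSign (y - θ), h⟫| ≤ ‖spatialSign (y - θ)‖ * ‖h‖ :=
      abs_real_inner_le_norm _ _
    have h2 : ‖spatialSign (y - θ)‖ * ‖h‖ ≤ 1 * ‖h‖ :=
      mul_le_mul_of_nonneg_right (spatialSign_norm_le _) (norm_nonneg h)
    have h3 : |⟪spatialSign (y - θ), h⟫| ≤ ‖h‖ := by linarith
    have := sq_le_sq' (neg_le_of_abs_le h3) (le_of_abs_le h3)
    linarith
  have hfnonneg : ∀ y, 0 ≤ f y := fun y =>
    div_nonneg (hnum y) (norm_nonneg _)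
  -- measurability
  have hmeas : Measurable f := by
    have h1 : Measurable fun y : EuclideanSpace ℝ (Fin k) => y - θ :=
      measurable_id.sub measurable_const
    have h2 : Measurable fun y : EuclideanSpace ℝ (Fin k) => spatialSign (y - θ) := by
      exact (h1.norm.inv).smul h1
    have h3 : Measurable fun y : EuclideanSpace ℝ (Fin k) =>
        ⟪spatialSign (y - θ), h⟫ := h2.inner measurable_const
    exact ((measurable_const.sub (h3.pow measurable_const)).div h1.norm)
  -- integrability
  have hfi : Integrable f P := by
    refine (hint.const_mul (‖h‖^2)).mono hmeas.aestronglyMeasurable ?_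
    filter_upwards with y
    rw [Real.norm_eq_abs, abs_of_nonneg (hfnonneg y)]
    have hb : f y ≤ ‖h‖^2 * ‖y - θ‖⁻¹ := by
      rw [hf]
      simp only [div_eq_mul_inv]
      exact mul_le_mul_of_nonneg_right
        (by linarith [sq_nonneg (⟪spatialSign (y - θ), h⟫)])
        (inv_nonneg.mpr (norm_nonneg _))
    refine hb.trans ?_
    exact le_abs_self _
  rw [integral_pos_iff_support_of_nonneg hfnonneg hfi]
  -- the zero set is contained in the line through θ in direction h
  set v : EuclideanSpace ℝ (Fin k) := ‖h‖⁻¹ • h with hv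
  have hvnorm : ‖v‖ = 1 := by
    simp [hv, norm_smul, abs_of_nonneg (inv_nonneg.mpr (norm_nonneg h)),
      inv_mul_cancel₀ hh']
  have hzero : ∀ y, f y = 0 → ∃ t : ℝ, y = θ + t • v := by
    intro y hy
    rcases eq_or_ne y θ with rfl | hyθ
    · exact ⟨0, by simp⟩
    have hsub : y - θ ≠ 0 := sub_ne_zero.mpr hyθ
    have hnz : ‖y - θ‖ ≠ 0 := norm_ne_zero_iff.mpr hsub
    have hnum0 : ‖h‖^2 - ⟪spatialSign (y - θ), h⟫^2 = 0 := by
      rcases div_eq_zero_iff.mp hy with h0 | h0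
      · exact h0
      · exact absurd h0 hnz
    set U := spatialSign (y - θ) with hU
    have hUnorm : ‖U‖ = 1 := spatialSign_norm_one hsub
    have hsq : ⟪U, h⟫^2 = ‖h‖^2 := by linarith
    have hyU : y - θ = ‖y - θ‖ • U := by
      rw [hU, spatialSign, smul_smul, mul_inv_cancel₀ hnz, one_smul]
    have hcases : ⟪U, h⟫ = ‖h‖ ∨ ⟪U, h⟫ = -‖h‖ := by
      rcases sq_eq_sq_iff_eq_or_eq_neg.mp hsq with h0 | h0
      · exact Or.inl h0
      · exact Or.inr h0
    rcases hcases with h0 | h0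
    · have : ⟪U, h⟫ = ‖U‖ * ‖h‖ := by rw [hUnorm, one_mul]; exact h0
      have heq : ‖h‖ • U = ‖U‖ • h := inner_eq_norm_mul_iff_real.mp this
      rw [hUnorm, one_smul] at heq
      have hUv : U = v := by
        rw [hv]; exact ((inv_smul_eq_iff₀ hh').mpr heq.symm).symm
      refine ⟨‖y - θ‖, ?_⟩
      have : y - θ = ‖y - θ‖ • v := hyU.trans (by rw [hUv])
      rw [← this]; abel
    · have : ⟪U, -h⟫ = ‖U‖ * ‖-h‖ := by
        rw [inner_neg_right, hUnorm, one_mul, norm_neg, h0, neg_neg]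
      have heq : ‖-h‖ • U = ‖U‖ • (-h) := inner_eq_norm_mul_iff_real.mp this
      rw [hUnorm, one_smul, norm_neg] at heq
      have hUv : U = -v := by
        have : U = ‖h‖⁻¹ • (-h) := ((inv_smul_eq_iff₀ hh').mpr heq.symm).symm
        rw [this, hv, smul_neg]
      refine ⟨-‖y - θ‖, ?_⟩
      have : y - θ = (-‖y - θ‖) • v := hyU.trans (by rw [hUv, smul_neg, neg_smul])
      rw [← this]; abel
  -- conclude positivity of the support measure
  have hsubset : {y | f y = 0} ⊆ {x | ∃ t : ℝ, x = θ + t • v} :=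
    fun y hy => hzero y hy
  have hline' := hline v hvnorm
  by_contra hcon
  push_neg at hcon
  have hsupp0 : P (Function.support f) = 0 := le_antisymm hcon zero_le
  have : (1 : ENNReal) ≤ P {y | f y = 0} + P (Function.support f) := by
    have hunion : {y | f y = 0} ∪ Function.support f = Set.univ := by
      ext y; simp [Function.support, em]
    calc (1 : ENNReal) = P Set.univ := (measure_univ).symm
      _ = P ({y | f y = 0} ∪ Function.support f) := by rw [hunion]
      _ ≤ P {y | f y = 0} + P (Function.support f) := measure_union_le _ _
  rw [hsupp0, add_zero] at this
  exact absurd (this.trans (measure_mono hsubset)) (not_le.mpr hline')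
end
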